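/- Let K be a field equipped with a complete nontrivial non-Archimedean absolute value, and let A and B be non-unital Banach algebras over K with nondegenerate products. Suppose A possesses a bounded approximate identity, and Φ : A → M(B) is a nondegenerate continuous algebra homomorphism into the multiplier algebra of B, meaning that the linear spans of {Φ(a)b : a ∈ A, b ∈ B} and of {bΦ(a) : a ∈ A, b ∈ B} are dense in B. Then Φ has a unique extension to a continuous algebra homomorphism Φ₁ : M(A) → M(B) between the multiplier algebras. -/

import Mathlib

open MultiplierAlgebra Filter

set_option linter.unusedSectionVars false

section MultExtAux

variable {K A B : Type*} [NontriviallyNormedField K]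
    [NonUnitalNormedRing A] [NormedSpace K A] [SMulCommClass K A A] [IsScalarTower K A A]
    [NonUnitalNormedRing B] [NormedSpace K B] [SMulCommClass K B B] [IsScalarTower K B B]

private theorem multExt_fst_mul (hA : ∀ b : A, (∀ a : A, a * b = 0) → b = 0)
    (T : 𝓜(K, A)) (x y : A) : T.fst (x * y) = T.fst x * y := by
  have h : ∀ z : A, z * (T.fst (x * y) - T.fst x * y) = 0 := by
    intro z
    rw [mul_sub, ← T.central z (x * y), ← mul_assoc, T.central z x, mul_assoc, sub_self]
  have := hA _ h
  rwa [sub_eq_zero] at this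

private theorem multExt_snd_mul (hA : ∀ a : A, (∀ b : A, a * b = 0) → a = 0)
    (T : 𝓜(K, A)) (x y : A) : T.snd (x * y) = x * T.snd y := by
  have h : ∀ z : A, (T.snd (x * y) - x * T.snd y) * z = 0 := by
    intro z
    rw [sub_mul, T.central (x * y) z, mul_assoc, ← T.central y z, ← mul_assoc, sub_self]
  have := hA _ h
  rwa [sub_eq_zero] at this

private theorem multExt_norm_fst_le (m : 𝓜(K, B)) : ‖m.fst‖ ≤ ‖m‖ := by
  rw [DoubleCentralizer.norm_def]; exact norm_fst_le _

private theorem multExt_norm_snd_le (m : 𝓜(K, B)) : ‖m.snd‖ ≤ ‖m‖ := by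
  rw [DoubleCentralizer.norm_def]; exact norm_snd_le _

private theorem multExt_cont_fst (b : B) : Continuous fun m : 𝓜(K, B) => m.fst b := by
  have h1 : Continuous fun m : 𝓜(K, B) => m.toProdMulOpposite :=
    DoubleCentralizer.isUniformEmbedding_toProdMulOpposite.toIsUniformInducing.uniformContinuous.continuous
  exact (ContinuousLinearMap.apply K B b).continuous.comp h1.fst

private theorem multExt_cont_snd (b : B) : Continuous fun m : 𝓜(K, B) => m.snd b := by
  have h1 : Continuous fun m : 𝓜(K, B) => m.toProdMulOpposite :=
    DoubleCentralizer.isUniformEmbedding_toProdMulOpposite.toIsUniformInducing.uniformContinuous.continuous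
  exact (ContinuousLinearMap.apply K B b).continuous.comp (MulOpposite.continuous_unop.comp h1.snd)

private theorem multExt_ext_on {S : Set B} (hd : Dense (Submodule.span K S : Set B))
    (f g : B →L[K] B) (h : ∀ x ∈ S, f x = g x) (x : B) : f x = g x := by
  have hEq : Set.EqOn (f : B → B) (g : B → B) (Submodule.span K S : Set B) :=
    LinearMap.eqOn_span' (f := (f : B →ₗ[K] B)) (g := (g : B →ₗ[K] B)) h
  exact congrFun (Continuous.ext_on hd f.continuous g.continuous hEq) x

end MultExtAux


set_option maxHeartbeats 1000000 in
/-- Let `K` be a field with a complete nontrivial non-Archimedean absolute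
value and let `A`, `B` be non-unital Banach algebras over `K` with nondegenerate products.
If `A` has a bounded approximate identity and `Φ : A → M(B)` is a nondegenerate continuous
algebra homomorphism into the multiplier algebra of `B` (that is, the linear spans of
`{Φ(a)b}` and `{bΦ(a)}` are dense in `B`), then `Φ` has a unique extension to a continuous
algebra homomorphism `Φ₁ : M(A) → M(B)`. -/
theorem multiplier_extension_of_nondegenerate_hom
    {K A B : Type*} [NontriviallyNormedField K] [CompleteSpace K] [IsUltrametricDist K]
    [NonUnitalNormedRing A] [NormedSpace K A] [SMulCommClass K A A] [IsScalarTower K A A]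
    [CompleteSpace A]
    [NonUnitalNormedRing B] [NormedSpace K B] [SMulCommClass K B B] [IsScalarTower K B B]
    [CompleteSpace B]
    (hAnd₁ : ∀ a : A, (∀ b : A, a * b = 0) → a = 0)
    (hAnd₂ : ∀ b : A, (∀ a : A, a * b = 0) → b = 0)
    (hBnd₁ : ∀ a : B, (∀ b : B, a * b = 0) → a = 0)
    (hBnd₂ : ∀ b : B, (∀ a : B, a * b = 0) → b = 0)
    (Λ : Type*) [Nonempty Λ] [SemilatticeSup Λ] (e : Λ → A) (C : ℝ)
    (he_bdd : ∀ l : Λ, ‖e l‖ ≤ C)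
    (he_left : ∀ x : A, Tendsto (fun l : Λ => e l * x) atTop (nhds x))
    (he_right : ∀ x : A, Tendsto (fun l : Λ => x * e l) atTop (nhds x))
    (Φ : A →ₙₐ[K] 𝓜(K, B)) (hΦcont : Continuous Φ)
    (hΦnd_left : Dense (Submodule.span K {x : B | ∃ (a : A) (b : B), (Φ a).fst b = x} : Set B))
    (hΦnd_right : Dense (Submodule.span K {x : B | ∃ (a : A) (b : B), (Φ a).snd b = x} : Set B)) :
    ∃! Φ₁ : 𝓜(K, A) →ₙₐ[K] 𝓜(K, B),
      Continuous Φ₁ ∧ ∀ a : A, Φ₁ (a : 𝓜(K, A)) = Φ a := by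
  classical
  haveI : (atTop : Filter Λ).NeBot := atTop_neBot
  set SL : Set B := {x : B | ∃ (a : A) (b : B), (Φ a).fst b = x} with hSL
  set SR : Set B := {x : B | ∃ (a : A) (b : B), (Φ a).snd b = x} with hSR
  -- a continuous linear map version of Φ
  let Φ' : A →L[K] 𝓜(K, B) := ⟨{ toFun := Φ, map_add' := map_add Φ, map_smul' := fun c x => map_smul Φ c x }, hΦcont⟩
  have hΦ'app : ∀ a : A, Φ' a = Φ a := fun _ => rfl
  have hC0 : 0 ≤ C := le_trans (norm_nonneg _) (he_bdd (Classical.arbitrary Λ))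
  -- uniform bounds
  have hboundL : ∀ (T : 𝓜(K, A)) (l : Λ) (b : B),
      ‖(Φ (T.fst (e l))).fst b‖ ≤ ‖Φ'‖ * C * ‖T‖ * ‖b‖ := by
    intro T l b
    calc ‖(Φ (T.fst (e l))).fst b‖ ≤ ‖(Φ (T.fst (e l))).fst‖ * ‖b‖ :=
          (Φ (T.fst (e l))).fst.le_opNorm b
      _ ≤ ‖Φ (T.fst (e l))‖ * ‖b‖ := by
          gcongr; exact multExt_norm_fst_le _
      _ ≤ (‖Φ'‖ * ‖T.fst (e l)‖) * ‖b‖ := by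
          gcongr; rw [← hΦ'app]; exact Φ'.le_opNorm _
      _ ≤ (‖Φ'‖ * (‖T‖ * C)) * ‖b‖ := by
          gcongr
          calc ‖T.fst (e l)‖ ≤ ‖T.fst‖ * ‖e l‖ := T.fst.le_opNorm _
            _ ≤ ‖T‖ * C := by
                apply mul_le_mul (multExt_norm_fst_le T) (he_bdd l) (norm_nonneg _) (norm_nonneg _)
      _ = ‖Φ'‖ * C * ‖T‖ * ‖b‖ := by ring
  have hboundR : ∀ (T : 𝓜(K, A)) (l : Λ) (b : B),
      ‖(Φ (T.snd (e l))).snd b‖ ≤ ‖Φ'‖ * C * ‖T‖ * ‖b‖ := by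
    intro T l b
    calc ‖(Φ (T.snd (e l))).snd b‖ ≤ ‖(Φ (T.snd (e l))).snd‖ * ‖b‖ :=
          (Φ (T.snd (e l))).snd.le_opNorm b
      _ ≤ ‖Φ (T.snd (e l))‖ * ‖b‖ := by
          gcongr; exact multExt_norm_snd_le _
      _ ≤ (‖Φ'‖ * ‖T.snd (e l)‖) * ‖b‖ := by
          gcongr; rw [← hΦ'app]; exact Φ'.le_opNorm _
      _ ≤ (‖Φ'‖ * (‖T‖ * C)) * ‖b‖ := by
          gcongr
          calc ‖T.snd (e l)‖ ≤ ‖T.snd‖ * ‖e l‖ := T.snd.le_opNorm _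
            _ ≤ ‖T‖ * C := by
                apply mul_le_mul (multExt_norm_snd_le T) (he_bdd l) (norm_nonneg _) (norm_nonneg _)
      _ = ‖Φ'‖ * C * ‖T‖ * ‖b‖ := by ring
  -- convergence on generators
  have hgenL : ∀ (T : 𝓜(K, A)) (a : A) (b : B),
      Tendsto (fun l : Λ => (Φ (T.fst (e l))).fst ((Φ a).fst b)) atTop
        (nhds ((Φ (T.fst a)).fst b)) := by
    intro T a b
    have hrw : ∀ x : A, (Φ x).fst ((Φ a).fst b) = (Φ (x * a)).fst b := by
      intro x
      rw [map_mul, DoubleCentralizer.mul_fst]; rfl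
    have hcont : Continuous fun x : A => (Φ (T.fst x)).fst b :=
      (multExt_cont_fst b).comp (hΦcont.comp T.fst.continuous)
    have := (hcont.tendsto a).comp (he_left a)
    simp only [Function.comp_def] at this
    refine Tendsto.congr (fun l => ?_) this
    rw [hrw, multExt_fst_mul hAnd₂]
  have hgenR : ∀ (T : 𝓜(K, A)) (a : A) (b : B),
      Tendsto (fun l : Λ => (Φ (T.snd (e l))).snd ((Φ a).snd b)) atTop
        (nhds ((Φ (T.snd a)).snd b)) := by
    intro T a b
    have hrw : ∀ x : A, (Φ x).snd ((Φ a).snd b) = (Φ (a * x)).snd b := by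
      intro x
      rw [map_mul, DoubleCentralizer.mul_snd]; rfl
    have hcont : Continuous fun x : A => (Φ (T.snd x)).snd b :=
      (multExt_cont_snd b).comp (hΦcont.comp T.snd.continuous)
    have := (hcont.tendsto a).comp (he_right a)
    simp only [Function.comp_def] at this
    refine Tendsto.congr (fun l => ?_) this
    rw [hrw, multExt_snd_mul hAnd₁]
  -- convergence on the spans
  have hspanL : ∀ (T : 𝓜(K, A)) (s : B), s ∈ Submodule.span K SL →
      ∃ y, Tendsto (fun l : Λ => (Φ (T.fst (e l))).fst s) atTop (nhds y) := by
    intro T s hs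
    induction hs using Submodule.span_induction with
    | mem x hx =>
        obtain ⟨a, b, rfl⟩ := hx
        exact ⟨_, hgenL T a b⟩
    | zero => exact ⟨0, by simpa using tendsto_const_nhds⟩
    | add x y _ _ hx hy =>
        obtain ⟨u, hu⟩ := hx; obtain ⟨v, hv⟩ := hy
        exact ⟨u + v, by simpa [map_add] using hu.add hv⟩
    | smul k x _ hx =>
        obtain ⟨u, hu⟩ := hx
        exact ⟨k • u, by simpa [map_smul] using hu.const_smul k⟩
  have hspanR : ∀ (T : 𝓜(K, A)) (s : B), s ∈ Submodule.span K SR →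
      ∃ y, Tendsto (fun l : Λ => (Φ (T.snd (e l))).snd s) atTop (nhds y) := by
    intro T s hs
    induction hs using Submodule.span_induction with
    | mem x hx =>
        obtain ⟨a, b, rfl⟩ := hx
        exact ⟨_, hgenR T a b⟩
    | zero => exact ⟨0, by simpa using tendsto_const_nhds⟩
    | add x y _ _ hx hy =>
        obtain ⟨u, hu⟩ := hx; obtain ⟨v, hv⟩ := hy
        exact ⟨u + v, by simpa [map_add] using hu.add hv⟩
    | smul k x _ hx =>
        obtain ⟨u, hu⟩ := hx
        exact ⟨k • u, by simpa [map_smul] using hu.const_smul k⟩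
  -- a bounded family of operators converging on a dense span converges everywhere
  have key : ∀ (F : Λ → B →L[K] B) (M : ℝ), (∀ (l : Λ) (b : B), ‖F l b‖ ≤ M * ‖b‖) →
      ∀ (S : Set B), Dense (Submodule.span K S : Set B) →
      (∀ s ∈ Submodule.span K S, ∃ y, Tendsto (fun l : Λ => F l s) atTop (nhds y)) →
      ∀ b : B, ∃ y, Tendsto (fun l : Λ => F l b) atTop (nhds y) := by
    intro F M hb S hdense hspan b
    apply cauchySeq_tendsto_of_complete
    rw [Metric.cauchySeq_iff]
    intro ε hε
    have hM1 : (0 : ℝ) < |M| + 1 := by positivity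
    obtain ⟨s, hsmem, hdist⟩ := Metric.mem_closure_iff.mp
      (by rw [hdense.closure_eq]; trivial : b ∈ closure (Submodule.span K S : Set B))
      (ε / (4 * (|M| + 1))) (by positivity)
    obtain ⟨y, hy⟩ := hspan s hsmem
    rw [Metric.tendsto_atTop] at hy
    obtain ⟨N, hN⟩ := hy (ε / 4) (by positivity)
    refine ⟨N, fun m hm n hn => ?_⟩
    have hds : ∀ l : Λ, dist (F l b) (F l s) < ε / 4 := by
      intro l
      rw [dist_eq_norm, ← map_sub]
      calc ‖F l (b - s)‖ ≤ M * ‖b - s‖ := hb l _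
        _ ≤ (|M| + 1) * ‖b - s‖ :=
            mul_le_mul_of_nonneg_right (le_trans (le_abs_self M) (by linarith)) (norm_nonneg _)
        _ < (|M| + 1) * (ε / (4 * (|M| + 1))) := by
            apply mul_lt_mul_of_pos_left _ hM1
            rw [← dist_eq_norm]
            exact hdist
        _ = ε / 4 := by field_simp
    calc dist (F m b) (F n b)
        ≤ dist (F m b) (F m s) + dist (F m s) (F n s) + dist (F n s) (F n b) :=
          dist_triangle4 _ _ _ _
      _ ≤ dist (F m b) (F m s) + (dist (F m s) y + dist y (F n s)) + dist (F n s) (F n b) := by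
          gcongr
          exact dist_triangle _ _ _
      _ < ε / 4 + (ε / 4 + ε / 4) + ε / 4 := by
          have h1 := hds m
          have h2 := hN m hm
          have h3 : dist y (F n s) < ε / 4 := by rw [dist_comm]; exact hN n hn
          have h4 : dist (F n s) (F n b) < ε / 4 := by rw [dist_comm]; exact hds n
          linarith
      _ = ε := by ring
  -- the limit operators
  have hconvL : ∀ (T : 𝓜(K, A)) (b : B),
      ∃ y, Tendsto (fun l : Λ => (Φ (T.fst (e l))).fst b) atTop (nhds y) := fun T b =>
    key (fun l => (Φ (T.fst (e l))).fst) (‖Φ'‖ * C * ‖T‖) (hboundL T) SL hΦnd_left (hspanL T) b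
  have hconvR : ∀ (T : 𝓜(K, A)) (b : B),
      ∃ y, Tendsto (fun l : Λ => (Φ (T.snd (e l))).snd b) atTop (nhds y) := fun T b =>
    key (fun l => (Φ (T.snd (e l))).snd) (‖Φ'‖ * C * ‖T‖) (hboundR T) SR hΦnd_right (hspanR T) b
  choose Lf hLf using hconvL
  choose Rf hRf using hconvR
  -- basic properties of the limits
  have hLfgen : ∀ (T : 𝓜(K, A)) (a : A) (b : B),
      Lf T ((Φ a).fst b) = (Φ (T.fst a)).fst b := fun T a b =>
    tendsto_nhds_unique (hLf T _) (hgenL T a b)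
  have hRfgen : ∀ (T : 𝓜(K, A)) (a : A) (b : B),
      Rf T ((Φ a).snd b) = (Φ (T.snd a)).snd b := fun T a b =>
    tendsto_nhds_unique (hRf T _) (hgenR T a b)
  have hLfadd : ∀ (T : 𝓜(K, A)) (b b' : B), Lf T (b + b') = Lf T b + Lf T b' := fun T b b' =>
    tendsto_nhds_unique (hLf T (b + b')) (by simpa [map_add] using (hLf T b).add (hLf T b'))
  have hRfadd : ∀ (T : 𝓜(K, A)) (b b' : B), Rf T (b + b') = Rf T b + Rf T b' := fun T b b' =>
    tendsto_nhds_unique (hRf T (b + b')) (by simpa [map_add] using (hRf T b).add (hRf T b'))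
  have hLfsmul : ∀ (T : 𝓜(K, A)) (k : K) (b : B), Lf T (k • b) = k • Lf T b := fun T k b =>
    tendsto_nhds_unique (hLf T (k • b)) (by simpa [map_smul] using (hLf T b).const_smul k)
  have hRfsmul : ∀ (T : 𝓜(K, A)) (k : K) (b : B), Rf T (k • b) = k • Rf T b := fun T k b =>
    tendsto_nhds_unique (hRf T (k • b)) (by simpa [map_smul] using (hRf T b).const_smul k)
  have hLfnorm : ∀ (T : 𝓜(K, A)) (b : B), ‖Lf T b‖ ≤ ‖Φ'‖ * C * ‖T‖ * ‖b‖ := fun T b =>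
    le_of_tendsto (hLf T b).norm (Eventually.of_forall fun l => hboundL T l b)
  have hRfnorm : ∀ (T : 𝓜(K, A)) (b : B), ‖Rf T b‖ ≤ ‖Φ'‖ * C * ‖T‖ * ‖b‖ := fun T b =>
    le_of_tendsto (hRf T b).norm (Eventually.of_forall fun l => hboundR T l b)
  -- linearity in T
  have hLfaddT : ∀ (T T' : 𝓜(K, A)) (b : B), Lf (T + T') b = Lf T b + Lf T' b := fun T T' b =>
    tendsto_nhds_unique (hLf (T + T') b)
      (by simpa [DoubleCentralizer.add_fst, map_add, DoubleCentralizer.add_fst,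
        ContinuousLinearMap.add_apply] using (hLf T b).add (hLf T' b))
  have hRfaddT : ∀ (T T' : 𝓜(K, A)) (b : B), Rf (T + T') b = Rf T b + Rf T' b := fun T T' b =>
    tendsto_nhds_unique (hRf (T + T') b)
      (by simpa [DoubleCentralizer.add_snd, map_add,
        ContinuousLinearMap.add_apply] using (hRf T b).add (hRf T' b))
  have hLfsmulT : ∀ (k : K) (T : 𝓜(K, A)) (b : B), Lf (k • T) b = k • Lf T b := fun k T b =>
    tendsto_nhds_unique (hLf (k • T) b)
      (by simpa [DoubleCentralizer.smul_fst, map_smul,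
        ContinuousLinearMap.smul_apply] using (hLf T b).const_smul k)
  have hRfsmulT : ∀ (k : K) (T : 𝓜(K, A)) (b : B), Rf (k • T) b = k • Rf T b := fun k T b =>
    tendsto_nhds_unique (hRf (k • T) b)
      (by simpa [DoubleCentralizer.smul_snd, map_smul,
        ContinuousLinearMap.smul_apply] using (hRf T b).const_smul k)
  have hLfzero : ∀ b : B, Lf 0 b = 0 := fun b =>
    tendsto_nhds_unique (hLf 0 b)
      (by simpa [DoubleCentralizer.zero_fst, map_zero] using
        (tendsto_const_nhds : Tendsto (fun _ : Λ => (0 : B)) atTop (nhds 0)))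
  have hRfzero : ∀ b : B, Rf 0 b = 0 := fun b =>
    tendsto_nhds_unique (hRf 0 b)
      (by simpa [DoubleCentralizer.zero_snd, map_zero] using
        (tendsto_const_nhds : Tendsto (fun _ : Λ => (0 : B)) atTop (nhds 0)))
  -- package the limits into continuous linear maps
  let LT : 𝓜(K, A) → (B →L[K] B) := fun T =>
    LinearMap.mkContinuous
      { toFun := Lf T, map_add' := hLfadd T, map_smul' := hLfsmul T }
      (‖Φ'‖ * C * ‖T‖) (hLfnorm T)
  let RT : 𝓜(K, A) → (B →L[K] B) := fun T =>
    LinearMap.mkContinuous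
      { toFun := Rf T, map_add' := hRfadd T, map_smul' := hRfsmul T }
      (‖Φ'‖ * C * ‖T‖) (hRfnorm T)
  have hLT : ∀ (T : 𝓜(K, A)) (b : B), LT T b = Lf T b := fun _ _ => rfl
  have hRT : ∀ (T : 𝓜(K, A)) (b : B), RT T b = Rf T b := fun _ _ => rfl
  -- the centrality condition
  have hcen1 : ∀ (T : 𝓜(K, A)) (a' : A) (b' : B) (a : A) (b : B),
      Rf T ((Φ a').snd b') * ((Φ a).fst b) = ((Φ a').snd b') * Lf T ((Φ a).fst b) := by
    intro T a' b' a b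
    rw [hRfgen, hLfgen, (Φ (T.snd a')).central, (Φ a').central]
    have h1 : (Φ (T.snd a')).fst ((Φ a).fst b) = (Φ (T.snd a' * a)).fst b := by
      rw [map_mul, DoubleCentralizer.mul_fst]; rfl
    have h2 : (Φ a').fst ((Φ (T.fst a)).fst b) = (Φ (a' * T.fst a)).fst b := by
      rw [map_mul, DoubleCentralizer.mul_fst]; rfl
    rw [h1, h2, T.central]
  have hcen2 : ∀ (T : 𝓜(K, A)) (a' : A) (b' : B) (y : B),
      Rf T ((Φ a').snd b') * y = ((Φ a').snd b') * Lf T y := by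
    intro T a' b' y
    have := multExt_ext_on hΦnd_left
      (ContinuousLinearMap.mul K B (Rf T ((Φ a').snd b')))
      ((ContinuousLinearMap.mul K B ((Φ a').snd b')).comp (LT T))
      (by rintro x ⟨a, b, rfl⟩
          simp only [ContinuousLinearMap.mul_apply', ContinuousLinearMap.comp_apply, hLT]
          exact hcen1 T a' b' a b) y
    simpa only [ContinuousLinearMap.mul_apply', ContinuousLinearMap.comp_apply, hLT] using this
  have hcen3 : ∀ (T : 𝓜(K, A)) (x y : B), Rf T x * y = x * Lf T y := by
    intro T x y
    have := multExt_ext_on hΦnd_right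
      (((ContinuousLinearMap.mul K B).flip y).comp (RT T))
      ((ContinuousLinearMap.mul K B).flip (Lf T y))
      (by rintro x ⟨a, b, rfl⟩
          simp only [ContinuousLinearMap.comp_apply, ContinuousLinearMap.flip_apply,
            ContinuousLinearMap.mul_apply', hRT]
          exact hcen2 T a b y) x
    simpa only [ContinuousLinearMap.comp_apply, ContinuousLinearMap.flip_apply,
      ContinuousLinearMap.mul_apply', hRT] using this
  -- the underlying function of the extension
  let Φ₁f : 𝓜(K, A) → 𝓜(K, B) := fun T => ⟨(LT T, RT T), hcen3 T⟩
  have hΦ₁fst : ∀ (T : 𝓜(K, A)) (b : B), (Φ₁f T).fst b = Lf T b := fun _ _ => rfl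
  have hΦ₁snd : ∀ (T : 𝓜(K, A)) (b : B), (Φ₁f T).snd b = Rf T b := fun _ _ => rfl
  -- the extension as a non-unital algebra homomorphism
  let Φ₁ : 𝓜(K, A) →ₙₐ[K] 𝓜(K, B) :=
    { toFun := Φ₁f
      map_smul' := fun k T => by
        refine DoubleCentralizer.ext K B _ _
          (Prod.ext (ContinuousLinearMap.ext fun b => ?_) (ContinuousLinearMap.ext fun b => ?_))
        · show Lf (k • T) b = (k • Φ₁f T).fst b
          rw [DoubleCentralizer.smul_fst, ContinuousLinearMap.smul_apply, hLfsmulT]; rfl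
        · show Rf (k • T) b = (k • Φ₁f T).snd b
          rw [DoubleCentralizer.smul_snd, ContinuousLinearMap.smul_apply, hRfsmulT]; rfl
      map_zero' := by
        refine DoubleCentralizer.ext K B _ _
          (Prod.ext (ContinuousLinearMap.ext fun b => ?_) (ContinuousLinearMap.ext fun b => ?_))
        · show Lf 0 b = (0 : 𝓜(K, B)).fst b
          rw [DoubleCentralizer.zero_fst, hLfzero]; rfl
        · show Rf 0 b = (0 : 𝓜(K, B)).snd b
          rw [DoubleCentralizer.zero_snd, hRfzero]; rfl
      map_add' := fun T T' => by
        refine DoubleCentralizer.ext K B _ _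
          (Prod.ext (ContinuousLinearMap.ext fun b => ?_) (ContinuousLinearMap.ext fun b => ?_))
        · show Lf (T + T') b = (Φ₁f T + Φ₁f T').fst b
          rw [DoubleCentralizer.add_fst, ContinuousLinearMap.add_apply, hLfaddT]; rfl
        · show Rf (T + T') b = (Φ₁f T + Φ₁f T').snd b
          rw [DoubleCentralizer.add_snd, ContinuousLinearMap.add_apply, hRfaddT]; rfl
      map_mul' := fun T T' => by
        refine DoubleCentralizer.ext K B _ _
          (Prod.ext (ContinuousLinearMap.ext fun x => ?_) (ContinuousLinearMap.ext fun x => ?_))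
        · show Lf (T * T') x = (Φ₁f T * Φ₁f T').fst x
          rw [DoubleCentralizer.mul_fst, ContinuousLinearMap.mul_apply]
          exact multExt_ext_on hΦnd_left (LT (T * T')) ((LT T).comp (LT T'))
            (by rintro z ⟨a, b, rfl⟩
                simp only [ContinuousLinearMap.comp_apply, hLT, hLfgen,
                  DoubleCentralizer.mul_fst, ContinuousLinearMap.mul_apply]) x
        · show Rf (T * T') x = (Φ₁f T * Φ₁f T').snd x
          rw [DoubleCentralizer.mul_snd, ContinuousLinearMap.mul_apply]
          exact multExt_ext_on hΦnd_right (RT (T * T')) ((RT T').comp (RT T))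
            (by rintro z ⟨a, b, rfl⟩
                simp only [ContinuousLinearMap.comp_apply, hRT, hRfgen,
                  DoubleCentralizer.mul_snd, ContinuousLinearMap.mul_apply]) x }
  have hΦ₁app : ∀ T : 𝓜(K, A), Φ₁ T = Φ₁f T := fun _ => rfl
  -- continuity
  have hΦ₁norm : ∀ T : 𝓜(K, A), ‖Φ₁f T‖ ≤ (‖Φ'‖ * C) * ‖T‖ := by
    intro T
    rw [DoubleCentralizer.norm_def, Prod.norm_def]
    apply max_le
    · show ‖LT T‖ ≤ ‖Φ'‖ * C * ‖T‖
      exact LinearMap.mkContinuous_norm_le _ (by positivity) (hLfnorm T)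
    · show ‖RT T‖ ≤ ‖Φ'‖ * C * ‖T‖
      exact LinearMap.mkContinuous_norm_le _ (by positivity) (hRfnorm T)
  have hΦ₁cont : Continuous Φ₁ :=
    AddMonoidHomClass.continuous_of_bound Φ₁ (‖Φ'‖ * C) hΦ₁norm
  -- extension property
  have hext : ∀ a : A, Φ₁f (a : 𝓜(K, A)) = Φ a := by
    intro a
    refine DoubleCentralizer.ext K B _ _
      (Prod.ext (ContinuousLinearMap.ext fun x => ?_) (ContinuousLinearMap.ext fun x => ?_))
    · show Lf (a : 𝓜(K, A)) x = (Φ a).fst x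
      exact multExt_ext_on hΦnd_left (LT (a : 𝓜(K, A))) (Φ a).fst
        (by rintro z ⟨a', b, rfl⟩
            rw [hLT, hLfgen]
            show (Φ ((ContinuousLinearMap.mul K A a) a')).fst b = _
            rw [ContinuousLinearMap.mul_apply', map_mul, DoubleCentralizer.mul_fst]; rfl) x
    · show Rf (a : 𝓜(K, A)) x = (Φ a).snd x
      exact multExt_ext_on hΦnd_right (RT (a : 𝓜(K, A))) (Φ a).snd
        (by rintro z ⟨a', b, rfl⟩
            rw [hRT, hRfgen]
            show (Φ (((ContinuousLinearMap.mul K A).flip a) a')).snd b = _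
            rw [ContinuousLinearMap.flip_apply, ContinuousLinearMap.mul_apply', map_mul,
              DoubleCentralizer.mul_snd]; rfl) x
  refine ⟨Φ₁, ⟨hΦ₁cont, fun a => hext a⟩, ?_⟩
  -- uniqueness
  rintro Ψ ⟨-, hΨ⟩
  have hTa : ∀ (T : 𝓜(K, A)) (a : A), T * (a : 𝓜(K, A)) = ((T.fst a : A) : 𝓜(K, A)) := by
    intro T a
    refine DoubleCentralizer.ext K A _ _
      (Prod.ext (ContinuousLinearMap.ext fun x => ?_) (ContinuousLinearMap.ext fun x => ?_))
    · show T.fst ((ContinuousLinearMap.mul K A a) x) = (ContinuousLinearMap.mul K A (T.fst a)) x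
      rw [ContinuousLinearMap.mul_apply', ContinuousLinearMap.mul_apply',
        multExt_fst_mul hAnd₂]
    · show ((ContinuousLinearMap.mul K A).flip a) (T.snd x)
        = ((ContinuousLinearMap.mul K A).flip (T.fst a)) x
      rw [ContinuousLinearMap.flip_apply, ContinuousLinearMap.flip_apply,
        ContinuousLinearMap.mul_apply', ContinuousLinearMap.mul_apply', T.central]
  have hAT : ∀ (T : 𝓜(K, A)) (a : A), (a : 𝓜(K, A)) * T = ((T.snd a : A) : 𝓜(K, A)) := by
    intro T a
    refine DoubleCentralizer.ext K A _ _
      (Prod.ext (ContinuousLinearMap.ext fun x => ?_) (ContinuousLinearMap.ext fun x => ?_))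
    · show (ContinuousLinearMap.mul K A a) (T.fst x) = (ContinuousLinearMap.mul K A (T.snd a)) x
      rw [ContinuousLinearMap.mul_apply', ContinuousLinearMap.mul_apply', T.central]
    · show T.snd (((ContinuousLinearMap.mul K A).flip a) x)
        = ((ContinuousLinearMap.mul K A).flip (T.snd a)) x
      rw [ContinuousLinearMap.flip_apply, ContinuousLinearMap.flip_apply,
        ContinuousLinearMap.mul_apply', ContinuousLinearMap.mul_apply',
        multExt_snd_mul hAnd₁]
  have h1 : ∀ (T : 𝓜(K, A)) (a : A), Ψ T * Φ a = Φ (T.fst a) := by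
    intro T a
    rw [← hΨ a, ← map_mul, hTa, hΨ]
  have h2 : ∀ (T : 𝓜(K, A)) (a : A), Φ a * Ψ T = Φ (T.snd a) := by
    intro T a
    rw [← hΨ a, ← map_mul, hAT, hΨ]
  apply DFunLike.ext
  intro T
  rw [hΦ₁app]
  refine DoubleCentralizer.ext K B _ _
    (Prod.ext (ContinuousLinearMap.ext fun x => ?_) (ContinuousLinearMap.ext fun x => ?_))
  · show (Ψ T).fst x = Lf T x
    exact multExt_ext_on hΦnd_left (Ψ T).fst (LT T)
      (by rintro z ⟨a, b, rfl⟩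
          rw [hLT, hLfgen]
          have : (Ψ T).fst ((Φ a).fst b) = (Ψ T * Φ a).fst b := by
            rw [DoubleCentralizer.mul_fst]; rfl
          rw [this, h1]) x
  · show (Ψ T).snd x = Rf T x
    exact multExt_ext_on hΦnd_right (Ψ T).snd (RT T)
      (by rintro z ⟨a, b, rfl⟩
          rw [hRT, hRfgen]
          have : (Ψ T).snd ((Φ a).snd b) = (Φ a * Ψ T).snd b := by
            rw [DoubleCentralizer.mul_snd]; rfl
          rw [this, h2]) x
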